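/- Let d ≥ 1, σ > 0, let ‖·‖_α be an arbitrary norm on ℝ^d, and let u : ℝ^d → ℝ be bounded and measurable with 𝔲 = sup_{x ∈ ℝ^d} |u(x)|. Then the Gaussian smoothing f of u is Lipschitz with respect to ‖·‖_α: for all x, y ∈ ℝ^d, |f(x) − f(y)| ≤ (𝔲/σ)√(2/π) · (sup_{‖w‖_α ≤ 1} ‖w‖₂) · ‖x − y‖_α. -/

import Mathlib

open MeasureTheory Real

noncomputable def gaussDensity (d : ℕ) (σ : ℝ) (z : EuclideanSpace ℝ (Fin d)) : ℝ :=
  (2 * Real.pi * σ ^ 2) ^ (-(d : ℝ) / 2) * Real.exp (-‖z‖ ^ 2 / (2 * σ ^ 2))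

noncomputable def gaussSmooth (d : ℕ) (σ : ℝ) (u : EuclideanSpace ℝ (Fin d) → ℝ)
    (x : EuclideanSpace ℝ (Fin d)) : ℝ :=
  ∫ z, u (x + z) * gaussDensity d σ z

/-! ### Auxiliary 1-dimensional Gaussian facts -/

/-- The one-dimensional Gaussian density. -/
noncomputable def g1 (σ t : ℝ) : ℝ :=
  (2 * Real.pi * σ ^ 2) ^ (-(1 : ℝ) / 2) * Real.exp (-t ^ 2 / (2 * σ ^ 2))

lemma g1_nonneg {σ : ℝ} (t : ℝ) : 0 ≤ g1 σ t := by
  unfold g1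
  positivity

lemma g1_mono {σ : ℝ} {s t : ℝ} (h : s ^ 2 ≤ t ^ 2) : g1 σ t ≤ g1 σ s := by
  unfold g1
  have hc : (0:ℝ) ≤ (2 * Real.pi * σ ^ 2) ^ (-(1:ℝ)/2) := by positivity
  apply mul_le_mul_of_nonneg_left _ hc
  apply Real.exp_le_exp.2
  rcases eq_or_lt_of_le (sq_nonneg σ) with hσ | hσ
  · rw [← hσ]; norm_num
  · apply div_le_div_of_nonneg_right (by linarith) (by linarith) |>.trans_eq rfl

lemma g1_le {σ : ℝ} (t : ℝ) : g1 σ t ≤ g1 σ 0 := by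
  apply g1_mono; simpa using sq_nonneg t

lemma g1_integrable {σ : ℝ} (hσ : 0 < σ) : Integrable (g1 σ) := by
  have hb : (0:ℝ) < (2 * σ ^ 2)⁻¹ := by positivity
  have : g1 σ = fun t => (2 * Real.pi * σ ^ 2) ^ (-(1 : ℝ) / 2) *
      Real.exp (-((2 * σ ^ 2)⁻¹) * t ^ 2) := by
    funext t
    unfold g1
    congr 1
    rw [neg_div, div_eq_inv_mul, neg_mul]
  rw [this]
  exact (integrable_exp_neg_mul_sq hb).const_mul _

lemma g1_integral {σ : ℝ} (hσ : 0 < σ) : ∫ t, g1 σ t = 1 := by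
  have hb : (0:ℝ) < (2 * σ ^ 2)⁻¹ := by positivity
  have hc : (0:ℝ) < 2 * Real.pi * σ ^ 2 := by positivity
  have h : ∫ t, g1 σ t = (2 * Real.pi * σ ^ 2) ^ (-(1:ℝ)/2) *
      ∫ t, Real.exp (-((2 * σ ^ 2)⁻¹) * t ^ 2) := by
    rw [← MeasureTheory.integral_const_mul]
    congr 1
    funext t
    unfold g1
    congr 1
    ring
  rw [h, integral_gaussian]
  have hde : Real.pi / (2 * σ ^ 2)⁻¹ = 2 * Real.pi * σ ^ 2 := by
    field_simp
  rw [hde]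
  have h2 : Real.pi * (2 * σ ^ 2) = 2 * Real.pi * σ ^ 2 := by ring
  rw [Real.sqrt_eq_rpow, ← Real.rpow_add hc]
  norm_num

lemma two_g1_zero {σ : ℝ} (hσ : 0 < σ) : 2 * g1 σ 0 = 1 / σ * Real.sqrt (2 / Real.pi) := by
  have hc : (0:ℝ) < 2 * Real.pi * σ ^ 2 := by positivity
  have h0 : g1 σ 0 = (2 * Real.pi * σ ^ 2) ^ (-(1:ℝ)/2) := by
    unfold g1; norm_num
  rw [h0, neg_div, Real.rpow_neg hc.le, ← Real.sqrt_eq_rpow]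
  have hs : Real.sqrt (2 * Real.pi * σ ^ 2) = Real.sqrt 2 * Real.sqrt Real.pi * σ := by
    rw [Real.sqrt_mul (by positivity), Real.sqrt_mul (by norm_num), Real.sqrt_sq hσ.le]
  have hd : Real.sqrt (2 / Real.pi) = Real.sqrt 2 / Real.sqrt Real.pi := by
    rw [Real.sqrt_div (by norm_num : (0:ℝ) ≤ 2)]
  have h2 : Real.sqrt 2 * Real.sqrt 2 = 2 := Real.mul_self_sqrt (by norm_num)
  have hs2 : (0:ℝ) < Real.sqrt 2 := Real.sqrt_pos.2 (by norm_num)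
  have hsπ : (0:ℝ) < Real.sqrt Real.pi := Real.sqrt_pos.2 Real.pi_pos
  rw [hs, hd]
  field_simp
  linear_combination (-1 : ℝ) * h2

lemma g1_tv {σ : ℝ} (hσ : 0 < σ) {a : ℝ} (ha : 0 ≤ a) :
    ∫ t, |g1 σ t - g1 σ (t + a)| ≤ a / σ * Real.sqrt (2 / Real.pi) := by
  have hg := g1_integrable hσ
  have hga : Integrable (fun t => g1 σ (t + a)) := hg.comp_add_right a
  have habs : Integrable (fun t => |g1 σ t - g1 σ (t + a)|) := (hg.sub hga).abs
  have htrans : ∀ c : ℝ, (∫ t in Set.Iic c, g1 σ (t + a)) = ∫ t in Set.Iic (c + a), g1 σ t := by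
    intro c
    have hpre : Set.Iic c = (fun t : ℝ => t + a) ⁻¹' Set.Iic (c + a) := by
      ext t; simp
    rw [hpre]
    exact (measurePreserving_add_right volume a).setIntegral_preimage_emb
      (measurableEmbedding_addRight a) _ _
  have key1 : (∫ t in Set.Iic (-(a/2)), |g1 σ t - g1 σ (t + a)|)
      = (∫ t in Set.Iic (a/2), g1 σ t) - ∫ t in Set.Iic (-(a/2)), g1 σ t := by
    rw [setIntegral_congr_fun measurableSet_Iic
      (g := fun t => g1 σ (t + a) - g1 σ t) (fun t ht => ?_)]
    · rw [integral_sub hga.integrableOn hg.integrableOn, htrans,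
        show -(a/2)+a = a/2 by ring]
    · have h1 : g1 σ t ≤ g1 σ (t + a) := by
        apply g1_mono
        simp only [Set.mem_Iic] at ht
        nlinarith
      rw [abs_of_nonpos (by linarith)]
      ring
  have hIoi : ∀ (h : ℝ → ℝ), Integrable h →
      (∫ t in Set.Ioi (-(a/2)), h t) = (∫ t, h t) - ∫ t in Set.Iic (-(a/2)), h t := by
    intro h hh
    have := intervalIntegral.integral_Iic_add_Ioi (b := -(a/2)) hh.integrableOn hh.integrableOn
    linarith
  have key2 : (∫ t in Set.Ioi (-(a/2)), |g1 σ t - g1 σ (t + a)|)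
      = (∫ t in Set.Iic (a/2), g1 σ t) - ∫ t in Set.Iic (-(a/2)), g1 σ t := by
    rw [setIntegral_congr_fun measurableSet_Ioi
      (g := fun t => g1 σ t - g1 σ (t + a)) (fun t ht => ?_)]
    · rw [integral_sub hg.integrableOn hga.integrableOn]
      have h1 := hIoi _ hg
      have h2 := hIoi _ hga
      have h3 := htrans (-(a/2))
      have h4 : (∫ t, g1 σ (t + a)) = ∫ t, g1 σ t := integral_add_right_eq_self _ a
      have h5 : -(a/2) + a = a/2 := by ring
      rw [h5] at h3
      linarith
    · have h1 : g1 σ (t + a) ≤ g1 σ t := by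
        apply g1_mono
        simp only [Set.mem_Ioi] at ht
        nlinarith
      rw [abs_of_nonneg (by linarith)]
  have hsplit : (∫ t, |g1 σ t - g1 σ (t + a)|)
      = (∫ t in Set.Iic (-(a/2)), |g1 σ t - g1 σ (t + a)|)
        + ∫ t in Set.Ioi (-(a/2)), |g1 σ t - g1 σ (t + a)| :=
    (intervalIntegral.integral_Iic_add_Ioi habs.integrableOn habs.integrableOn).symm
  have hiv : (∫ t in Set.Iic (a/2), g1 σ t) - (∫ t in Set.Iic (-(a/2)), g1 σ t)
      = ∫ t in (-(a/2))..(a/2), g1 σ t :=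
    intervalIntegral.integral_Iic_sub_Iic hg.integrableOn hg.integrableOn
  have hbound : (∫ t in (-(a/2))..(a/2), g1 σ t) ≤ a * g1 σ 0 := by
    have h1 : (∫ t in (-(a/2))..(a/2), g1 σ t) ≤ ∫ _t in (-(a/2))..(a/2), g1 σ 0 := by
      apply intervalIntegral.integral_mono_on (by linarith)
        hg.intervalIntegrable intervalIntegrable_const
      intro t _
      exact g1_le t
    rw [intervalIntegral.integral_const, smul_eq_mul] at h1
    have : (a/2 - -(a/2)) = a := by ring
    rw [this] at h1
    exact h1
  calc (∫ t, |g1 σ t - g1 σ (t + a)|)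
      = 2 * ((∫ t in Set.Iic (a/2), g1 σ t) - ∫ t in Set.Iic (-(a/2)), g1 σ t) := by
        rw [hsplit, key1, key2]; ring
    _ ≤ 2 * (a * g1 σ 0) := by
        rw [hiv]
        have := hbound
        nlinarith [hbound]
    _ = a / σ * Real.sqrt (2 / Real.pi) := by
        have := two_g1_zero hσ
        calc 2 * (a * g1 σ 0) = a * (2 * g1 σ 0) := by ring
          _ = a * (1 / σ * Real.sqrt (2 / Real.pi)) := by rw [this]
          _ = a / σ * Real.sqrt (2 / Real.pi) := by ring


/-! ### Multidimensional facts -/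

lemma gaussDensity_eq_prod {d : ℕ} {σ : ℝ} (hσ : 0 < σ) (z : EuclideanSpace ℝ (Fin d)) :
    gaussDensity d σ z = ∏ i, g1 σ (z i) := by
  have hc : (0:ℝ) < 2 * Real.pi * σ ^ 2 := by positivity
  have hnorm : ‖z‖ ^ 2 = ∑ i, z i ^ 2 := by
    rw [EuclideanSpace.norm_eq, Real.sq_sqrt (Finset.sum_nonneg fun i _ => sq_nonneg _)]
    simp [sq_abs]
  unfold gaussDensity g1
  rw [Finset.prod_mul_distrib, Finset.prod_const, Finset.card_univ, Fintype.card_fin]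
  congr 1
  · rw [← Real.rpow_natCast ((2 * Real.pi * σ ^ 2) ^ (-(1:ℝ)/2)) d,
      ← Real.rpow_mul hc.le]
    congr 1
    ring
  · rw [← Real.exp_sum]
    congr 1
    rw [hnorm, neg_div, Finset.sum_div, ← Finset.sum_neg_distrib]
    simp [neg_div]

lemma gaussDensity_congr_norm {d : ℕ} {σ : ℝ} {y y' : EuclideanSpace ℝ (Fin d)}
    (h : ‖y‖ = ‖y'‖) : gaussDensity d σ y = gaussDensity d σ y' := by
  unfold gaussDensity
  rw [h]

lemma gaussDensity_integrable {d : ℕ} {σ : ℝ} (hσ : 0 < σ) :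
    Integrable (gaussDensity d σ) := by
  have he := (EuclideanSpace.volume_preserving_symm_measurableEquiv_toLp (Fin d)).symm
  rw [← he.integrable_comp_emb (MeasurableEquiv.measurableEmbedding _)]
  have heq : (gaussDensity d σ ∘ (MeasurableEquiv.toLp 2 (Fin d → ℝ)).symm.symm)
      = fun x : Fin d → ℝ => ∏ i, g1 σ (x i) := by
    funext x
    simp only [Function.comp_apply]
    rw [gaussDensity_eq_prod hσ]
    rfl
  rw [heq]
  exact Integrable.fintype_prod (f := fun _ => g1 σ) (fun i => g1_integrable hσ)

lemma gauss_tv {d : ℕ} (hd : 1 ≤ d) {σ : ℝ} (hσ : 0 < σ) (v : EuclideanSpace ℝ (Fin d)) :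
    ∫ z, |gaussDensity d σ z - gaussDensity d σ (z + v)|
      ≤ ‖v‖ / σ * Real.sqrt (2 / Real.pi) := by
  rcases eq_or_ne v 0 with rfl | hv
  · simp only [add_zero, sub_self, abs_zero, integral_zero]
    positivity
  have ha : 0 < ‖v‖ := norm_pos_iff.2 hv
  set a := ‖v‖ with ha_def
  set i0 : Fin d := ⟨0, hd⟩ with hi0
  set w : EuclideanSpace ℝ (Fin d) := EuclideanSpace.single i0 a with hw_def
  have hw : ‖w‖ = ‖v‖ := by
    rw [hw_def, EuclideanSpace.norm_single]
    exact abs_of_pos ha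
  set T := Submodule.reflection (ℝ ∙ (w - v))ᗮ with hT_def
  have hTv : T w = v := Submodule.reflection_sub hw
  have hstep1 : (∫ z, |gaussDensity d σ z - gaussDensity d σ (z + v)|)
      = ∫ z, |gaussDensity d σ z - gaussDensity d σ (z + w)| := by
    rw [← T.measurePreserving.integral_comp T.toHomeomorph.measurableEmbedding
      (fun z => |gaussDensity d σ z - gaussDensity d σ (z + v)|)]
    congr 1
    funext z
    have h1 : gaussDensity d σ (T z) = gaussDensity d σ z :=
      gaussDensity_congr_norm (T.norm_map z)
    have h2 : gaussDensity d σ (T z + v) = gaussDensity d σ (z + w) := by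
      rw [← hTv, ← map_add]
      exact gaussDensity_congr_norm (T.norm_map _)
    rw [h1, h2]
  set f : Fin d → ℝ → ℝ := fun i t => if i = i0 then |g1 σ t - g1 σ (t + a)| else g1 σ t
    with hf_def
  have hpoint : ∀ z : EuclideanSpace ℝ (Fin d),
      |gaussDensity d σ z - gaussDensity d σ (z + w)| = ∏ i, f i (z i) := by
    intro z
    rw [gaussDensity_eq_prod hσ, gaussDensity_eq_prod hσ]
    have hzw : ∀ i : Fin d, (z + w) i = z i + (if i = i0 then a else 0) := by
      intro i
      have : (z + w) i = z i + w i := rfl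
      rw [this, hw_def]
      congr 1
      rw [EuclideanSpace.single_apply]
    have h1 : (∏ i, g1 σ (z i))
        = g1 σ (z i0) * ∏ i ∈ Finset.univ.erase i0, g1 σ (z i) :=
      (Finset.mul_prod_erase _ _ (Finset.mem_univ i0)).symm
    have h2 : (∏ i, g1 σ ((z + w) i))
        = g1 σ (z i0 + a) * ∏ i ∈ Finset.univ.erase i0, g1 σ (z i) := by
      rw [← Finset.mul_prod_erase Finset.univ _ (Finset.mem_univ i0)]
      have hx0 : g1 σ ((z + w) i0) = g1 σ (z i0 + a) := by rw [hzw i0, if_pos rfl]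
      have hrest : ∀ i ∈ Finset.univ.erase i0, g1 σ ((z + w) i) = g1 σ (z i) := fun i hi => by
        rw [hzw i, if_neg (Finset.ne_of_mem_erase hi), add_zero]
      rw [hx0, Finset.prod_congr rfl hrest]
    have h3 : (∏ i, f i (z i))
        = |g1 σ (z i0) - g1 σ (z i0 + a)| * ∏ i ∈ Finset.univ.erase i0, g1 σ (z i) := by
      rw [← Finset.mul_prod_erase Finset.univ _ (Finset.mem_univ i0)]
      have hx0 : f i0 (z i0) = |g1 σ (z i0) - g1 σ (z i0 + a)| := by rw [hf_def]; simp
      have hrest : ∀ i ∈ Finset.univ.erase i0, f i (z i) = g1 σ (z i) := fun i hi => by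
        rw [hf_def]; simp [Finset.ne_of_mem_erase hi]
      rw [hx0, Finset.prod_congr rfl hrest]
    rw [h1, h2, h3, ← sub_mul, abs_mul,
      abs_of_nonneg (Finset.prod_nonneg fun i _ => g1_nonneg _)]
  have he := (EuclideanSpace.volume_preserving_symm_measurableEquiv_toLp (Fin d)).symm
  have hstep2 : (∫ z, |gaussDensity d σ z - gaussDensity d σ (z + w)|)
      = ∫ x : Fin d → ℝ, ∏ i, f i (x i) := by
    rw [← he.integral_comp (MeasurableEquiv.measurableEmbedding _)
      (fun z => |gaussDensity d σ z - gaussDensity d σ (z + w)|)]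
    congr 1
    funext x
    exact hpoint _
  rw [hstep1, hstep2, integral_fintype_prod_volume_eq_prod]
  have hprod : (∏ i, ∫ t, f i t)
      = (∫ t, |g1 σ t - g1 σ (t + a)|) * ∏ i ∈ Finset.univ.erase i0, ∫ t, g1 σ t := by
    rw [← Finset.mul_prod_erase Finset.univ _ (Finset.mem_univ i0)]
    have hx0 : (∫ t, f i0 t) = ∫ t, |g1 σ t - g1 σ (t + a)| := by rw [hf_def]; simp
    have hrest : ∀ i ∈ Finset.univ.erase i0, (∫ t, f i t) = ∫ t, g1 σ t := fun i hi => by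
      rw [hf_def]; simp [Finset.ne_of_mem_erase hi]
    rw [hx0, Finset.prod_congr rfl hrest]
  rw [hprod, g1_integral hσ]
  simp only [Finset.prod_const_one, mul_one]
  exact g1_tv hσ ha.le

/-- Lipschitz property of the Gaussian smoothing with respect to an
arbitrary norm `N` on `ℝ^d`:
`|f(x) − f(y)| ≤ (𝔲/σ)√(2/π) (sup_{N(w) ≤ 1} ‖w‖₂) N(x − y)`. -/
theorem gaussSmooth_lipschitz_arbitrary_norm
    (d : ℕ) (hd : 1 ≤ d) (σ : ℝ) (hσ : 0 < σ)
    (N : EuclideanSpace ℝ (Fin d) → ℝ)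
    (hN_zero : ∀ w, N w = 0 ↔ w = 0)
    (hN_smul : ∀ (a : ℝ) (w : EuclideanSpace ℝ (Fin d)), N (a • w) = |a| * N w)
    (hN_add : ∀ v w : EuclideanSpace ℝ (Fin d), N (v + w) ≤ N v + N w)
    (u : EuclideanSpace ℝ (Fin d) → ℝ)
    (hu_meas : Measurable u) (hu_bdd : ∃ M : ℝ, ∀ x, |u x| ≤ M) :
    ∀ x y : EuclideanSpace ℝ (Fin d),
      |gaussSmooth d σ u x - gaussSmooth d σ u y|
        ≤ (⨆ w : EuclideanSpace ℝ (Fin d), |u w|) / σ * Real.sqrt (2 / Real.pi)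
            * (⨆ w : {w : EuclideanSpace ℝ (Fin d) // N w ≤ 1}, ‖(w : EuclideanSpace ℝ (Fin d))‖)
            * N (x - y) := by
  intro x y
  obtain ⟨M, hM⟩ := hu_bdd
  set 𝔲 := ⨆ w : EuclideanSpace ℝ (Fin d), |u w| with h𝔲
  have hbdd : BddAbove (Set.range fun w : EuclideanSpace ℝ (Fin d) => |u w|) :=
    ⟨M, by rintro r ⟨w, rfl⟩; exact hM w⟩
  have hu_le : ∀ w, |u w| ≤ 𝔲 := fun w => le_ciSup hbdd w
  have h𝔲0 : 0 ≤ 𝔲 := le_trans (abs_nonneg _) (hu_le 0)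
  have hN0 : N 0 = 0 := (hN_zero 0).2 rfl
  have hN_neg : ∀ w, N (-w) = N w := by
    intro w
    have := hN_smul (-1) w
    simpa using this
  have hN_nonneg : ∀ w, 0 ≤ N w := by
    intro w
    have h := hN_add w (-w)
    rw [add_neg_cancel, hN0, hN_neg] at h
    linarith
  have hsum : ∀ (s : Finset (Fin d)) (h : Fin d → EuclideanSpace ℝ (Fin d)),
      N (∑ i ∈ s, h i) ≤ ∑ i ∈ s, N (h i) := by
    intro s
    induction s using Finset.cons_induction with
    | empty => intro h; simp [hN0]
    | cons i s his ih =>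
      intro h
      rw [Finset.sum_cons, Finset.sum_cons]
      exact le_trans (hN_add _ _) (add_le_add le_rfl (ih h))
  set C := ∑ i : Fin d, N (EuclideanSpace.single i 1) with hC
  have hC0 : 0 ≤ C := Finset.sum_nonneg fun i _ => hN_nonneg _
  have hcoord : ∀ (w : EuclideanSpace ℝ (Fin d)) (i : Fin d), |w i| ≤ ‖w‖ := by
    intro w i
    rw [EuclideanSpace.norm_eq, ← Real.sqrt_sq_eq_abs]
    apply Real.sqrt_le_sqrt
    have := Finset.single_le_sum (f := fun j => ‖w j‖ ^ 2)
      (fun j _ => sq_nonneg _) (Finset.mem_univ i)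
    simpa [Real.norm_eq_abs, sq_abs] using this
  have hNC : ∀ w, N w ≤ C * ‖w‖ := by
    intro w
    have hrepr : (∑ i, w i • EuclideanSpace.single i (1:ℝ)) = w := by
      have h := (EuclideanSpace.basisFun (Fin d) ℝ).sum_repr w
      simpa using h
    calc N w = N (∑ i, w i • EuclideanSpace.single i 1) := by rw [hrepr]
      _ ≤ ∑ i, N (w i • EuclideanSpace.single i 1) := hsum _ _
      _ = ∑ i, |w i| * N (EuclideanSpace.single i 1) := by
          apply Finset.sum_congr rfl
          intro i _
          rw [hN_smul]
      _ ≤ ∑ i, ‖w‖ * N (EuclideanSpace.single i 1) := by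
          apply Finset.sum_le_sum
          intro i _
          exact mul_le_mul_of_nonneg_right (hcoord w i) (hN_nonneg _)
      _ = C * ‖w‖ := by rw [← Finset.mul_sum]; ring
  have hcont : Continuous N := by
    apply LipschitzWith.continuous (K := ⟨C, hC0⟩)
    apply LipschitzWith.of_dist_le_mul
    intro w v'
    rw [Real.dist_eq, dist_eq_norm]
    have h1 : N w - N v' ≤ N (w - v') := by
      have := hN_add (w - v') v'
      simpa using this
    have h2 : N v' - N w ≤ N (w - v') := by
      have := hN_add (v' - w) w
      have h3 : N (v' - w) = N (w - v') := by
        rw [← hN_neg (v' - w), neg_sub]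
      simp only [sub_add_cancel] at this
      linarith
    have h4 := hNC (w - v')
    rw [abs_le]
    change -(C * ‖w - v'‖) ≤ N w - N v' ∧ N w - N v' ≤ C * ‖w - v'‖
    constructor <;> [linarith; linarith]
  have hsph : (Metric.sphere (0:EuclideanSpace ℝ (Fin d)) 1).Nonempty := by
    refine ⟨EuclideanSpace.single ⟨0, hd⟩ 1, ?_⟩
    simp [EuclideanSpace.norm_single]
  obtain ⟨w₀, hw₀, hmin⟩ :=
    (isCompact_sphere (0:EuclideanSpace ℝ (Fin d)) 1).exists_isMinOn hsph hcont.continuousOn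
  rw [isMinOn_iff] at hmin
  have hw₀ne : w₀ ≠ 0 := by
    intro h
    rw [mem_sphere_zero_iff_norm] at hw₀
    rw [h] at hw₀
    simp at hw₀
  have hcpos : 0 < N w₀ :=
    lt_of_le_of_ne (hN_nonneg w₀) (fun h => hw₀ne ((hN_zero w₀).1 h.symm))
  set c := N w₀ with hc_def
  have hlow : ∀ w, c * ‖w‖ ≤ N w := by
    intro w
    rcases eq_or_ne w 0 with rfl | hw
    · simp [hN0]
    · have hnw : 0 < ‖w‖ := norm_pos_iff.2 hw
      have hmem : ‖w‖⁻¹ • w ∈ Metric.sphere (0:EuclideanSpace ℝ (Fin d)) 1 := by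
        rw [mem_sphere_zero_iff_norm, norm_smul, Real.norm_eq_abs,
          abs_of_pos (inv_pos.2 hnw), inv_mul_cancel₀ hnw.ne']
      have h := hmin _ hmem
      rw [hN_smul, abs_of_pos (inv_pos.2 hnw)] at h
      have h2 : ‖w‖ * (‖w‖⁻¹ * N w) = N w := by field_simp
      calc c * ‖w‖ = ‖w‖ * c := mul_comm _ _
        _ ≤ ‖w‖ * (‖w‖⁻¹ * N w) := mul_le_mul_of_nonneg_left h hnw.le
        _ = N w := h2
  set S := ⨆ w : {w : EuclideanSpace ℝ (Fin d) // N w ≤ 1}, ‖(w : EuclideanSpace ℝ (Fin d))‖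
    with hS
  have hSbdd : BddAbove (Set.range
      fun w : {w : EuclideanSpace ℝ (Fin d) // N w ≤ 1} => ‖(w : EuclideanSpace ℝ (Fin d))‖) := by
    refine ⟨c⁻¹, ?_⟩
    rintro r ⟨⟨w, hw⟩, rfl⟩
    show ‖w‖ ≤ c⁻¹
    have h1 : c * ‖w‖ ≤ 1 := le_trans (hlow w) hw
    rw [← inv_mul_cancel_left₀ hcpos.ne' ‖w‖]
    calc c⁻¹ * (c * ‖w‖) ≤ c⁻¹ * 1 :=
          mul_le_mul_of_nonneg_left h1 (inv_pos.2 hcpos).le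
      _ = c⁻¹ := mul_one _
  have hnormle : ∀ v', ‖v'‖ ≤ S * N v' := by
    intro v'
    rcases eq_or_ne v' 0 with rfl | hv'
    · simp [hN0]
    · have hNv : 0 < N v' :=
        lt_of_le_of_ne (hN_nonneg v') (fun h => hv' ((hN_zero v').1 h.symm))
      have hmem : N ((N v')⁻¹ • v') ≤ 1 := by
        rw [hN_smul, abs_of_pos (inv_pos.2 hNv), inv_mul_cancel₀ hNv.ne']
      have hle : ‖((⟨(N v')⁻¹ • v', hmem⟩ : {w : EuclideanSpace ℝ (Fin d) // N w ≤ 1}) :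
          EuclideanSpace ℝ (Fin d))‖ ≤ S := le_ciSup hSbdd _
      simp only [norm_smul, Real.norm_eq_abs, abs_of_pos (inv_pos.2 hNv)] at hle
      have h2 := mul_le_mul_of_nonneg_right hle hNv.le
      rw [mul_comm (N v')⁻¹ ‖v'‖, mul_assoc, inv_mul_cancel₀ hNv.ne', mul_one] at h2
      exact h2
  set v := x - y with hv_def
  have hρ : Integrable (gaussDensity d σ) := gaussDensity_integrable hσ
  have hρv : Integrable (fun z => gaussDensity d σ (z + v)) := hρ.comp_add_right v
  have hmx : AEStronglyMeasurable (fun z : EuclideanSpace ℝ (Fin d) => u (x + z)) volume :=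
    (hu_meas.comp (measurable_const.add measurable_id)).aestronglyMeasurable
  have hbd : ∃ C', ∀ z : EuclideanSpace ℝ (Fin d), ‖u (x + z)‖ ≤ C' :=
    ⟨M, fun z => by rw [Real.norm_eq_abs]; exact hM _⟩
  have hix : Integrable (fun z => u (x + z) * gaussDensity d σ z) := hρ.bdd_mul hmx (ae_of_all _ hbd.choose_spec)
  have hixv : Integrable (fun z => u (x + z) * gaussDensity d σ (z + v)) := hρv.bdd_mul hmx (ae_of_all _ hbd.choose_spec)
  have key : gaussSmooth d σ u y = ∫ z, u (x + z) * gaussDensity d σ (z + v) := by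
    unfold gaussSmooth
    rw [← integral_add_right_eq_self (fun z => u (y + z) * gaussDensity d σ z) v]
    congr 1
    funext z
    have h1 : y + (z + v) = x + z := by rw [hv_def]; abel
    rw [h1]
  have hTV := gauss_tv hd hσ v
  calc |gaussSmooth d σ u x - gaussSmooth d σ u y|
      = |∫ z, u (x + z) * (gaussDensity d σ z - gaussDensity d σ (z + v))| := by
        rw [key]
        unfold gaussSmooth
        rw [← integral_sub hix hixv]
        congr 1
        apply integral_congr_ae
        apply Filter.Eventually.of_forall
        intro z
        simp only [Pi.sub_apply]
        ring
    _ ≤ ∫ z, |u (x + z) * (gaussDensity d σ z - gaussDensity d σ (z + v))| := by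
        have h := norm_integral_le_integral_norm
          (μ := volume) (fun z => u (x + z) * (gaussDensity d σ z - gaussDensity d σ (z + v)))
        simp only [Real.norm_eq_abs] at h
        exact h
    _ ≤ ∫ z, 𝔲 * |gaussDensity d σ z - gaussDensity d σ (z + v)| := by
        apply integral_mono
        · apply Integrable.abs
          apply (hix.sub hixv).congr
          apply Filter.Eventually.of_forall
          intro z
          simp only [Pi.sub_apply]
          ring
        · exact ((hρ.sub hρv).abs).const_mul 𝔲
        · intro z
          dsimp only
          rw [abs_mul]
          exact mul_le_mul_of_nonneg_right (hu_le _) (abs_nonneg _)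
    _ = 𝔲 * ∫ z, |gaussDensity d σ z - gaussDensity d σ (z + v)| :=
        MeasureTheory.integral_const_mul _ _
    _ ≤ 𝔲 * (‖v‖ / σ * Real.sqrt (2 / Real.pi)) := mul_le_mul_of_nonneg_left hTV h𝔲0
    _ ≤ 𝔲 * ((S * N v) / σ * Real.sqrt (2 / Real.pi)) := by
        gcongr
        exact hnormle v
    _ = 𝔲 / σ * Real.sqrt (2 / Real.pi) * S * N v := by ring
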